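/- Let A be a graded ring and suppose the right ideal A_+ is generated (as a right ideal) by homogeneous elements b_1, …, b_m of positive degrees; set N = max(deg b_1, …, deg b_m). Then for every n ≥ 1 one has A_{≥Nn} ⊆ (A_+)^n; equivalently, every homogeneous element of A of degree ≥ N·n is a finite sum of products x_1·x_2·⋯·x_n in which every factor x_i is homogeneous of positive degree. (The key inclusion underlying Proposition 3.4 and Corollary 3.5.) -/
import Mathlib


/-!
The key inclusion underlying Proposition 3.4 / Corollary 3.5: if `A_+` is generated
as a right ideal by homogeneous elements `b 0, …, b (m-1)` of positive degrees and
`N` is the maximum of their degrees, then `A_{≥ N·n} ⊆ (A_+)^n` for every `n ≥ 1`.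
-/

/-- The product `I·J` of two subsets of `A`: the additive span of the products
`x * y` with `x ∈ I`, `y ∈ J`. -/
def setIdealMul {A : Type*} [Ring A] (I J : Set A) : Set A :=
  (AddSubgroup.closure {z : A | ∃ x ∈ I, ∃ y ∈ J, z = x * y} : AddSubgroup A)

/-- The `n`-th power of an ideal (as a set); the `0`-th power is `A` itself. -/
def setIdealPow {A : Type*} [Ring A] (I : Set A) : ℕ → Set A
  | 0 => Set.univ
  | n + 1 => setIdealMul I (setIdealPow I n)

/-- The tail `A_{≥ n}`: elements all of whose homogeneous components have
degree `≥ n`.  `A_+ = A_{≥ 1}`. -/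
def geIdeal {A : Type*} [Ring A] (𝒜 : ℕ → AddSubgroup A) [GradedRing 𝒜]
    (n : ℕ) : Set A :=
  {x : A | ∀ m : ℕ, m < n → ((DirectSum.decompose 𝒜 x m : 𝒜 m) : A) = 0}

/-- The right ideal of `A` generated by a set `s`. -/
def rightIdealSpan {A : Type*} [Ring A] (s : Set A) : Set A :=
  (AddSubgroup.closure {y : A | ∃ a ∈ s, ∃ r : A, y = a * r} : AddSubgroup A)

section Aux

open DirectSum

variable {A : Type*} [Ring A] (𝒜 : ℕ → AddSubgroup A) [GradedRing 𝒜]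

/-- The degree-`k` projection as an additive monoid hom `A →+ A`. -/
def gradedProj (k : ℕ) : A →+ A :=
  (𝒜 k).subtype.comp ((DFinsupp.evalAddMonoidHom k).comp
    (DirectSum.decomposeAddEquiv 𝒜).toAddMonoidHom)

lemma gradedProj_apply (k : ℕ) (x : A) :
    gradedProj 𝒜 k x = ((DirectSum.decompose 𝒜 x k : 𝒜 k) : A) := rfl

lemma geIdeal_mono {j k : ℕ} (h : j ≤ k) : geIdeal 𝒜 k ⊆ geIdeal 𝒜 j :=
  fun _ hx m hm => hx m (lt_of_lt_of_le hm h)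

lemma homog_mem_geIdeal {a : A} {e K : ℕ} (ha : a ∈ 𝒜 e) (hK : K ≤ e) :
    a ∈ geIdeal 𝒜 K :=
  fun m hm => DirectSum.decompose_of_mem_ne 𝒜 ha (by omega)

lemma zero_mem_geIdeal (K : ℕ) : (0 : A) ∈ geIdeal 𝒜 K := by
  intro m _
  simp

end Aux

/-- The key inclusion `A_{≥ N·n} ⊆ (A_+)^n` for `n ≥ 1`. -/
theorem geIdeal_subset_pow_irrelevant {A : Type*} [Ring A] (𝒜 : ℕ → AddSubgroup A)
    [GradedRing 𝒜] (m : ℕ) (hm : 0 < m) (b : Fin m → A) (d : Fin m → ℕ)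
    (hd : ∀ i, 0 < d i) (hb : ∀ i, b i ∈ 𝒜 (d i))
    (hgen : geIdeal 𝒜 1 = rightIdealSpan (Set.range b)) :
    ∀ n : ℕ, 1 ≤ n →
      geIdeal 𝒜 (Finset.univ.sup d * n) ⊆ setIdealPow (geIdeal 𝒜 1) n := by
  classical
  set N := Finset.univ.sup d with hNdef
  have hN1 : 1 ≤ N := le_trans (hd ⟨0, hm⟩) (Finset.le_sup (Finset.mem_univ _))
  intro n hn
  induction n, hn using Nat.le_induction with
  | base =>
    intro x hx
    have hx1 : x ∈ geIdeal 𝒜 1 := geIdeal_mono 𝒜 (by omega) hx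
    show x ∈ (AddSubgroup.closure
      {z : A | ∃ u ∈ geIdeal 𝒜 1, ∃ v ∈ setIdealPow (geIdeal 𝒜 1) 0, z = u * v} : AddSubgroup A)
    exact AddSubgroup.subset_closure ⟨x, hx1, 1, trivial, (mul_one x).symm⟩
  | succ n hn ih =>
    intro x hx
    set T : AddSubgroup A := AddSubgroup.closure
      {z : A | ∃ u ∈ geIdeal 𝒜 1, ∃ v ∈ setIdealPow (geIdeal 𝒜 1) n, z = u * v} with hTdef
    show x ∈ T
    have hNle : N ≤ N * (n + 1) := Nat.le_mul_of_pos_right N (by omega)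
    have hmul : N * (n + 1) = N * n + N := Nat.mul_succ N n
    have key : ∀ k, N * (n + 1) ≤ k → ∀ y ∈ rightIdealSpan (Set.range b),
        ((DirectSum.decompose 𝒜 y k : 𝒜 k) : A) ∈ T := by
      intro k hk y hy
      refine AddSubgroup.closure_induction ?_ ?_ ?_ ?_ hy
      · rintro z ⟨a, ⟨i, rfl⟩, r, rfl⟩
        have hdN : d i ≤ N := Finset.le_sup (Finset.mem_univ i)
        have hik : d i ≤ k := by omega
        rw [DirectSum.coe_decompose_mul_of_left_mem_of_le 𝒜 (hb i) hik]
        refine AddSubgroup.subset_closure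
          ⟨b i, homog_mem_geIdeal 𝒜 (hb i) (hd i), _, ?_, rfl⟩
        refine ih ?_
        exact homog_mem_geIdeal 𝒜 (DirectSum.decompose 𝒜 r (k - d i)).2 (by omega)
      · simpa using T.zero_mem
      · intro u v _ _ pu pv
        have : gradedProj 𝒜 k (u + v) ∈ T := by
          rw [map_add]; exact T.add_mem pu pv
        exact this
      · intro u _ pu
        have : gradedProj 𝒜 k (-u) ∈ T := by
          rw [map_neg]; exact T.neg_mem pu
        exact this
    have hx1 : x ∈ rightIdealSpan (Set.range b) := by
      rw [← hgen]
      exact geIdeal_mono 𝒜 (by omega) hx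
    rw [← DirectSum.sum_support_decompose 𝒜 x]
    refine T.sum_mem fun k _ => ?_
    by_cases hk : N * (n + 1) ≤ k
    · exact key k hk x hx1
    · rw [hx k (by omega)]
      exact T.zero_mem
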